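/- If τ, σ : I → ℝ are differentiable on an open interval I with τ' = σ and σ' = 2τσ, and σ(t₀) = 0 for some t₀ ∈ I, then σ is identically zero on I and τ is constant on I; if σ(t₀) ≠ 0 then σ(t) has the same (strict) sign as σ(t₀) for all t ∈ I, and τ is monotone on I. -/

import Mathlib

open Set Real

/-- Core lemma: if `σ` vanishes at one point of the open interval, it vanishes
identically, by uniqueness of solutions of the linear ODE `σ' = 2τσ`. -/
lemma sigma_zero_of_zero (a b : ℝ) (τ σ : ℝ → ℝ)
    (hτ : ∀ t ∈ Set.Ioo a b, HasDerivAt τ (σ t) t)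
    (hσ : ∀ t ∈ Set.Ioo a b, HasDerivAt σ (2 * τ t * σ t) t)
    (c : ℝ) (hc : c ∈ Set.Ioo a b) (hc0 : σ c = 0) :
    ∀ t ∈ Set.Ioo a b, σ t = 0 := by
  intro t ht
  -- choose a compact subinterval of `Ioo a b` containing `c` and `t`
  set u := min c t with hu
  set v := max c t with hv
  have hau : a < u := lt_min hc.1 ht.1
  have hvb : v < b := max_lt hc.2 ht.2
  set a' := (a + u) / 2 with ha'
  set b' := (v + b) / 2 with hb'
  have ha'u : a' < u := by dsimp [a']; linarith
  have haa' : a < a' := by dsimp [a']; linarith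
  have hvb' : v < b' := by dsimp [b']; linarith
  have hb'b : b' < b := by dsimp [b']; linarith
  have ha'b' : a' ≤ b' := le_of_lt (lt_of_lt_of_le ha'u
    (le_trans (min_le_max) (le_of_lt hvb')))
  have hsub : Set.Icc a' b' ⊆ Set.Ioo a b := fun x hx =>
    ⟨lt_of_lt_of_le haa' hx.1, lt_of_le_of_lt hx.2 hb'b⟩
  have hcmem : c ∈ Set.Ioo a' b' :=
    ⟨lt_of_lt_of_le ha'u (min_le_left _ _), lt_of_le_of_lt (le_max_left _ _) hvb'⟩
  have htmem : t ∈ Set.Ioo a' b' :=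
    ⟨lt_of_lt_of_le ha'u (min_le_right _ _), lt_of_le_of_lt (le_max_right _ _) hvb'⟩
  -- bound `|2 * τ|` on the compact interval
  have hτcont : ContinuousOn (fun x => |2 * τ x|) (Set.Icc a' b') := by
    apply ContinuousOn.abs
    apply ContinuousOn.mul continuousOn_const
    intro x hx
    exact ((hτ x (hsub hx)).continuousAt).continuousWithinAt
  obtain ⟨K, hK'⟩ := isCompact_Icc.bddAbove_image hτcont
  have hK : ∀ x ∈ Set.Icc a' b', |2 * τ x| ≤ K := fun x hx =>
    hK' (Set.mem_image_of_mem _ hx)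
  have hK0 : 0 ≤ K := le_trans (abs_nonneg _)
    (hK a' (Set.left_mem_Icc.2 ha'b'))
  -- set up the ODE
  set w : ℝ → ℝ → ℝ := fun s x => 2 * τ (Set.projIcc a' b' ha'b' s : ℝ) * x with hw
  have hlip : ∀ s : ℝ, LipschitzOnWith K.toNNReal (w s) Set.univ := by
    intro s
    have : LipschitzWith ‖(2 * τ ((Set.projIcc a' b' ha'b' s : ℝ)))‖₊
        (fun x => 2 * τ (Set.projIcc a' b' ha'b' s : ℝ) * x) := by
      simpa [smul_eq_mul] using
        lipschitzWith_smul (β := ℝ) (2 * τ (Set.projIcc a' b' ha'b' s : ℝ))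
    refine (this.weaken ?_).lipschitzOnWith
    rw [← NNReal.coe_le_coe]
    have h1 : |2 * τ (Set.projIcc a' b' ha'b' s : ℝ)| ≤ K :=
      hK _ (Subtype.coe_prop (Set.projIcc a' b' ha'b' s))
    rw [Real.coe_toNNReal _ hK0]
    simpa [abs_mul] using h1
  have key : Set.EqOn σ (fun _ => (0 : ℝ)) (Set.Ioo a' b') := by
    apply ODE_solution_unique_of_mem_Ioo (fun s _ => hlip s) hcmem
    · intro s hs
      refine ⟨?_, Set.mem_univ _⟩
      have : (Set.projIcc a' b' ha'b' s : ℝ) = s :=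
        congrArg _ (Set.projIcc_of_mem ha'b' (Set.Ioo_subset_Icc_self hs))
      rw [hw]; dsimp only
      rw [this]
      exact hσ s (hsub (Set.Ioo_subset_Icc_self hs))
    · intro s hs
      refine ⟨?_, Set.mem_univ _⟩
      have h0 : w s 0 = 0 := by simp [hw]
      rw [h0]
      exact hasDerivAt_const s (0 : ℝ)
    · simpa using hc0
  simpa using key htmem

theorem stmt_1 (a b : ℝ) (τ σ : ℝ → ℝ) (t₀ : ℝ) (ht₀ : t₀ ∈ Set.Ioo a b)
    (hτ : ∀ t ∈ Set.Ioo a b, HasDerivAt τ (σ t) t)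
    (hσ : ∀ t ∈ Set.Ioo a b, HasDerivAt σ (2 * τ t * σ t) t) :
    (σ t₀ = 0 →
      (∀ t ∈ Set.Ioo a b, σ t = 0) ∧
      (∀ s ∈ Set.Ioo a b, ∀ t ∈ Set.Ioo a b, τ s = τ t)) ∧
    (0 < σ t₀ → ∀ t ∈ Set.Ioo a b, 0 < σ t) ∧
    (σ t₀ < 0 → ∀ t ∈ Set.Ioo a b, σ t < 0) ∧
    (σ t₀ ≠ 0 → MonotoneOn τ (Set.Ioo a b) ∨ AntitoneOn τ (Set.Ioo a b)) := by
  have hσcont : ContinuousOn σ (Set.Ioo a b) := fun x hx =>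
    ((hσ x hx).continuousAt).continuousWithinAt
  have hτcont : ContinuousOn τ (Set.Ioo a b) := fun x hx =>
    ((hτ x hx).continuousAt).continuousWithinAt
  -- if σ vanishes anywhere, it vanishes everywhere
  have hzero : ∀ c ∈ Set.Ioo a b, σ c = 0 → ∀ t ∈ Set.Ioo a b, σ t = 0 :=
    fun c hc hc0 => sigma_zero_of_zero a b τ σ hτ hσ c hc hc0
  -- sign preservation
  have hsign : ∀ s ∈ Set.Ioo a b, σ s ≠ 0 → ∀ t ∈ Set.Ioo a b, σ t ≠ 0 := by
    intro s hs hs0 t ht ht0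
    exact hs0 (hzero t ht ht0 s hs)
  have hpos : 0 < σ t₀ → ∀ t ∈ Set.Ioo a b, 0 < σ t := by
    intro h0 t ht
    rcases lt_trichotomy (σ t) 0 with hlt | heq | hgt
    · -- IVT gives a zero between, contradiction
      exfalso
      have hsub : Set.Icc (min t₀ t) (max t₀ t) ⊆ Set.Ioo a b := fun x hx =>
        ⟨lt_of_lt_of_le (lt_min ht₀.1 ht.1) hx.1,
         lt_of_le_of_lt hx.2 (max_lt ht₀.2 ht.2)⟩
      have hcont : ContinuousOn σ (Set.uIcc t₀ t) := by
        rw [Set.uIcc_eq_union]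
        exact hσcont.mono (by
          intro x hx
          rcases hx with hx | hx
          · exact hsub ⟨le_trans (min_le_left _ _) hx.1, le_trans hx.2 (le_max_right _ _)⟩
          · exact hsub ⟨le_trans (min_le_right _ _) hx.1, le_trans hx.2 (le_max_left _ _)⟩)
      have : (0 : ℝ) ∈ Set.uIcc (σ t₀) (σ t) :=
        Set.mem_uIcc.2 (Or.inr ⟨le_of_lt hlt, le_of_lt h0⟩)
      obtain ⟨c, hc, hc0⟩ := intermediate_value_uIcc hcont this
      have hcmem : c ∈ Set.Ioo a b := by
        rw [Set.uIcc_eq_union] at hc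
        rcases hc with hc | hc
        · exact hsub ⟨le_trans (min_le_left _ _) hc.1, le_trans hc.2 (le_max_right _ _)⟩
        · exact hsub ⟨le_trans (min_le_right _ _) hc.1, le_trans hc.2 (le_max_left _ _)⟩
      exact absurd (hzero c hcmem hc0 t₀ ht₀) (ne_of_gt h0)
    · exact absurd (hzero t ht heq t₀ ht₀) (ne_of_gt h0)
    · exact hgt
  have hneg : σ t₀ < 0 → ∀ t ∈ Set.Ioo a b, σ t < 0 := by
    intro h0 t ht
    rcases lt_trichotomy (σ t) 0 with hlt | heq | hgt
    · exact hlt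
    · exact absurd (hzero t ht heq t₀ ht₀) (ne_of_lt h0)
    · exfalso
      have hsub : Set.Icc (min t₀ t) (max t₀ t) ⊆ Set.Ioo a b := fun x hx =>
        ⟨lt_of_lt_of_le (lt_min ht₀.1 ht.1) hx.1,
         lt_of_le_of_lt hx.2 (max_lt ht₀.2 ht.2)⟩
      have hcont : ContinuousOn σ (Set.uIcc t₀ t) := by
        rw [Set.uIcc_eq_union]
        exact hσcont.mono (by
          intro x hx
          rcases hx with hx | hx
          · exact hsub ⟨le_trans (min_le_left _ _) hx.1, le_trans hx.2 (le_max_right _ _)⟩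
          · exact hsub ⟨le_trans (min_le_right _ _) hx.1, le_trans hx.2 (le_max_left _ _)⟩)
      have : (0 : ℝ) ∈ Set.uIcc (σ t₀) (σ t) :=
        Set.mem_uIcc.2 (Or.inl ⟨le_of_lt h0, le_of_lt hgt⟩)
      obtain ⟨c, hc, hc0⟩ := intermediate_value_uIcc hcont this
      have hcmem : c ∈ Set.Ioo a b := by
        rw [Set.uIcc_eq_union] at hc
        rcases hc with hc | hc
        · exact hsub ⟨le_trans (min_le_left _ _) hc.1, le_trans hc.2 (le_max_right _ _)⟩
        · exact hsub ⟨le_trans (min_le_right _ _) hc.1, le_trans hc.2 (le_max_left _ _)⟩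
      exact absurd (hzero c hcmem hc0 t₀ ht₀) (ne_of_lt h0)
  refine ⟨?_, hpos, hneg, ?_⟩
  · intro h0
    have hall : ∀ t ∈ Set.Ioo a b, σ t = 0 := hzero t₀ ht₀ h0
    refine ⟨hall, ?_⟩
    -- τ has zero derivative on the convex set Ioo a b, hence is constant
    have hmono : MonotoneOn τ (Set.Ioo a b) := by
      apply monotoneOn_of_deriv_nonneg (convex_Ioo a b) hτcont
      · intro x hx
        rw [interior_Ioo] at hx
        exact (hτ x hx).differentiableAt.differentiableWithinAt
      · intro x hx
        rw [interior_Ioo] at hx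
        rw [(hτ x hx).deriv, hall x hx]
    have hanti : AntitoneOn τ (Set.Ioo a b) := by
      apply antitoneOn_of_deriv_nonpos (convex_Ioo a b) hτcont
      · intro x hx
        rw [interior_Ioo] at hx
        exact (hτ x hx).differentiableAt.differentiableWithinAt
      · intro x hx
        rw [interior_Ioo] at hx
        rw [(hτ x hx).deriv, hall x hx]
    intro s hs t ht
    rcases le_total s t with hst | hst
    · exact le_antisymm (hmono hs ht hst) (hanti hs ht hst)
    · exact le_antisymm (hanti ht hs hst) (hmono ht hs hst)
  · intro hne
    rcases hne.lt_or_gt with h | h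
    · right
      have := strictAntiOn_of_deriv_neg (convex_Ioo a b) hτcont (fun x hx => by
        rw [interior_Ioo] at hx
        rw [(hτ x hx).deriv]
        exact hneg h x hx)
      exact this.antitoneOn
    · left
      have := strictMonoOn_of_deriv_pos (convex_Ioo a b) hτcont (fun x hx => by
        rw [interior_Ioo] at hx
        rw [(hτ x hx).deriv]
        exact hpos h x hx)
      exact this.monotoneOn
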